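/- For any vertex-weighted graph (G, w) and any nonempty set S ⊆ E(G), X_{(G,w)} = Σ_{∅ ≠ I ⊆ S} (−1)^{|I|−1} X_{(G−I, w)} + (−1)^{|S|} X_{(G/S, w_{G/S})}. -/

import Mathlib

open SimpleGraph

/-- Proper coloring for an edge set over `Sym2 V` (loops allowed): adjacent (or equal, for a
loop) endpoints must receive different colors. -/
def ProperCol {V : Type*} (E : Set (Sym2 V)) (k : V -> Nat) : Prop :=
  forall u v : V, s(u, v) ∈ E -> k u ≠ k v

/-- Weighted chromatic symmetric function `X_{(G,w)}` as a formal power series in the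
variables `x_0, x_1, …` : the coefficient of a monomial `d` is the number of proper
colorings whose total weight in color `i` is `d i` for every `i`. -/
noncomputable def csfW {V : Type*} (E : Set (Sym2 V)) (w : V -> Nat) : MvPowerSeries Nat Int :=
  fun d => (Nat.card {k : V -> Nat |
    ProperCol E k ∧ forall i : Nat, (∑ᶠ v ∈ {v : V | k v = i}, w v) = d i} : Int)

/-- Chromatic symmetric function `X_G` of a simple graph. -/
noncomputable def csf {V : Type*} (G : SimpleGraph V) : MvPowerSeries Nat Int :=
  csfW G.edgeSet (fun _ => 1)

/-- The setoid identifying the endpoints of the edges in `S` (contraction of `S`). -/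
def cSetoid {V : Type*} (S : Set (Sym2 V)) : Setoid V :=
  Relation.EqvGen.setoid (fun x y => s(x, y) ∈ S)

/-- Vertex set of the contraction `G/S`. -/
def CVert {V : Type*} (S : Set (Sym2 V)) : Type _ := Quotient (cSetoid S)

/-- Quotient map onto the contracted vertex set. -/
def cmk {V : Type*} (S : Set (Sym2 V)) : V -> CVert S := Quotient.mk _

/-- Edge set of the contraction `G/S`: the images of the edges of `E` outside `S`
(edges joining identified vertices become loops). -/
def cEdges {V : Type*} (E S : Set (Sym2 V)) : Set (Sym2 (CVert S)) :=
  (Sym2.map (cmk S)) '' (E \ S)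

/-- The contracted weight function: each merged vertex carries the sum of the weights
of the vertices identified into it. -/
noncomputable def cWeight {V : Type*} (S : Set (Sym2 V)) (w : V -> Nat) : CVert S -> Nat :=
  fun c => ∑ᶠ v ∈ {v : V | cmk S v = c}, w v


open Finset in
lemma alt_sum_powerset_filter {α : Type*} (B S : Finset α)
    [DecidablePred (fun I : Finset α => B ⊆ I)] [Decidable (B = S)] (hBS : B ⊆ S) :
    ∑ I ∈ S.powerset.filter (fun I => B ⊆ I), (-1 : ℤ) ^ I.card
      = if B = S then (-1 : ℤ) ^ S.card else 0 := by
  classical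
  have key : ∑ I ∈ S.powerset.filter (fun I => B ⊆ I), (-1 : ℤ) ^ I.card
      = ∑ J ∈ (S \ B).powerset, (-1 : ℤ) ^ (J.card + B.card) := by
    refine Finset.sum_nbij' (fun I => I \ B) (fun J => J ∪ B) ?_ ?_ ?_ ?_ ?_
    · intro I hI
      simp only [mem_filter, mem_powerset] at hI
      exact mem_powerset.2 (sdiff_subset_sdiff hI.1 Subset.rfl)
    · intro J hJ
      simp only [mem_powerset] at hJ
      exact mem_filter.2 ⟨mem_powerset.2 (union_subset (hJ.trans sdiff_subset) hBS),
        subset_union_right⟩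
    · intro I hI
      simp only [mem_filter, mem_powerset] at hI
      exact sdiff_union_of_subset hI.2
    · intro J hJ
      simp only [mem_powerset] at hJ
      have hd : Disjoint J B := (sdiff_disjoint.mono_left hJ)
      rw [union_sdiff_distrib, sdiff_self, hd.sdiff_eq_left]
      simp
    · intro I hI
      simp only [mem_filter, mem_powerset] at hI
      rw [card_sdiff_add_card_eq_card hI.2]
  rw [key]
  simp_rw [pow_add, ← Finset.sum_mul, Finset.sum_powerset_neg_one_pow_card]
  by_cases h : B = S
  · subst h; simp
  · have : S \ B ≠ ∅ := by
      rw [Ne, sdiff_eq_empty_iff_subset]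
      intro h2
      exact h (subset_antisymm hBS h2)
    rw [if_neg this, if_neg h, zero_mul]

open Finset in
lemma finsum_setOf_eq {α : Type*} [Fintype α] (p : α → Prop) [DecidablePred p] (w : α → ℕ) :
    (∑ᶠ v ∈ {v : α | p v}, w v) = ∑ v : α, if p v then w v else 0 := by
  rw [← Finset.sum_filter, ← finsum_mem_coe_finset]
  congr 1
  ext v; simp

open Finset in
lemma wcond_finite {V : Type*} [Fintype V] (w : V → ℕ) (hw : ∀ v, 0 < w v) (d : ℕ →₀ ℕ) :
    {k : V → ℕ | ∀ i : ℕ, (∑ᶠ v ∈ {v : V | k v = i}, w v) = d i}.Finite := by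
  classical
  apply Set.Finite.subset (Set.Finite.pi (fun _ : V => d.support.finite_toSet))
  intro k hk
  rw [Set.mem_univ_pi]
  intro v
  simp only [Finset.mem_coe, Finsupp.mem_support_iff]
  intro h0
  have h1 := hk (k v)
  rw [finsum_setOf_eq, h0] at h1
  have h2 : (if k v = k v then w v else 0) ≤ ∑ u : V, if k u = k v then w u else 0 :=
    Finset.single_le_sum (f := fun u => if k u = k v then w u else 0)
      (fun u _ => Nat.zero_le _) (Finset.mem_univ v)
  rw [if_pos rfl] at h2
  have h3 := hw v
  omega

open Finset in
lemma natcard_setOf {V : Type*} [Fintype V] (P : (V → ℕ) → Prop) [DecidablePred P]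
    {Wp : (V → ℕ) → Prop} (hW : {k : V → ℕ | Wp k}.Finite) :
    Nat.card {k : V → ℕ | P k ∧ Wp k} = (hW.toFinset.filter P).card := by
  have hfin : {k : V → ℕ | P k ∧ Wp k}.Finite := hW.subset (fun k hk => hk.2)
  rw [Nat.card_coe_set_eq, Set.ncard_eq_toFinset_card _ hfin]
  congr 1
  ext k
  simp [and_comm]

lemma lift_respects {V : Type*} (S : Set (Sym2 V)) (k : V → ℕ)
    (hk : ∀ u v : V, s(u, v) ∈ S → k u = k v) :
    ∀ a b : V, (cSetoid S) a b → k a = k b := by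
  intro a b hab
  have hab' : Relation.EqvGen (fun x y => s(x, y) ∈ S) a b := hab
  clear hab
  induction hab' with
  | rel x y h => exact hk x y h
  | refl x => rfl
  | symm x y _ ih => exact ih.symm
  | trans x y z _ _ ih1 ih2 => exact ih1.trans ih2

open Finset in
lemma weight_transfer {V : Type*} [Fintype V] (S : Set (Sym2 V)) (w k : V → ℕ)
    (h : ∀ a b : V, (cSetoid S) a b → k a = k b) (i : ℕ) :
    (∑ᶠ v ∈ {v : V | k v = i}, w v)
      = ∑ᶠ c ∈ {c : CVert S | Quotient.lift k h c = i}, cWeight S w c := by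
  classical
  haveI : Finite (CVert S) := Quotient.finite _
  haveI : Fintype (CVert S) := Fintype.ofFinite _
  rw [finsum_setOf_eq (p := fun v => k v = i), @finsum_setOf_eq (CVert S) _ (fun c => Quotient.lift k h c = i)
    (fun c => instDecidableEqNat _ _) (cWeight S w)]
  have hlift : ∀ v : V, Quotient.lift k h (cmk S v) = k v := fun v => rfl
  symm
  calc ∑ c : CVert S, (if Quotient.lift k h c = i then cWeight S w c else 0)
      = ∑ c : CVert S, ∑ v : V,
          (if cmk S v = c then (if k v = i then w v else 0) else 0) := by
        refine Finset.sum_congr rfl fun c _ => ?_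
        by_cases hc : Quotient.lift k h c = i
        · rw [if_pos hc, cWeight, finsum_setOf_eq]
          refine Finset.sum_congr rfl fun v _ => ?_
          by_cases hv : cmk S v = c
          · rw [if_pos hv, if_pos hv, if_pos (by rw [← hlift v, hv, hc])]
          · rw [if_neg hv, if_neg hv]
        · rw [if_neg hc]
          symm
          refine Finset.sum_eq_zero fun v _ => ?_
          by_cases hv : cmk S v = c
          · rw [if_pos hv, if_neg (fun hkv => hc (by rw [← hv, hlift v, hkv]))]
          · rw [if_neg hv]
    _ = ∑ v : V, ∑ c : CVert S,
          (if cmk S v = c then (if k v = i then w v else 0) else 0) := Finset.sum_comm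
    _ = ∑ v : V, (if k v = i then w v else 0) := by
        refine Finset.sum_congr rfl fun v _ => ?_
        rw [Finset.sum_ite_eq]
        exact if_pos (Finset.mem_univ _)

open Finset in
lemma card_contract {V : Type*} [Fintype V] (E : Set (Sym2 V)) (S : Set (Sym2 V))
    (w : V → ℕ) (d : ℕ →₀ ℕ) :
    Nat.card {k : V → ℕ | (ProperCol (E \ S) k ∧ ∀ u v : V, s(u, v) ∈ S → k u = k v)
        ∧ ∀ i : ℕ, (∑ᶠ v ∈ {v : V | k v = i}, w v) = d i}
      = Nat.card {k' : CVert S → ℕ | ProperCol (cEdges E S) k'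
        ∧ ∀ i : ℕ, (∑ᶠ c ∈ {c : CVert S | k' c = i}, cWeight S w c) = d i} := by
  apply Nat.card_congr
  refine Equiv.ofBijective
    (fun kk => ⟨Quotient.lift kk.1 (lift_respects S kk.1 kk.2.1.2), ?_, ?_⟩) ⟨?_, ?_⟩
  · intro u v huv
    obtain ⟨e, he, hmap⟩ := huv
    induction e using Sym2.ind with
    | _ a b =>
      rw [Sym2.map_pair_eq, Sym2.eq_iff] at hmap
      have hab : kk.1 a ≠ kk.1 b := kk.2.1.1 a b he
      rcases hmap with ⟨h1, h2⟩ | ⟨h1, h2⟩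
      · rw [← h1, ← h2]; exact hab
      · rw [← h1, ← h2]; exact fun hh => hab hh.symm
  · intro i
    rw [← weight_transfer S w kk.1 (lift_respects S kk.1 kk.2.1.2) i]
    exact kk.2.2 i
  · intro k1 k2 hke
    apply Subtype.ext
    funext v
    exact congrArg (fun f => f.1 (cmk S v)) hke
  · intro k'
    have hmono : ∀ u v : V, s(u, v) ∈ S → k'.1 (cmk S u) = k'.1 (cmk S v) :=
      fun u v huv => congrArg k'.1 (Quotient.sound (Relation.EqvGen.rel u v huv))
    have hresp := lift_respects S (fun v => k'.1 (cmk S v)) hmono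
    have heq : Quotient.lift (fun v => k'.1 (cmk S v)) hresp = k'.1 :=
      funext fun c => Quotient.ind
        (motive := fun c => Quotient.lift (fun v => k'.1 (cmk S v)) hresp c = k'.1 c)
        (fun v => rfl) c
    refine ⟨⟨fun v => k'.1 (cmk S v), ⟨⟨?_, hmono⟩, ?_⟩⟩, ?_⟩
    · intro u v huv
      exact k'.2.1 (cmk S u) (cmk S v) ⟨s(u, v), huv, Sym2.map_pair_eq _ _ _⟩
    · intro i
      rw [weight_transfer S w (fun v => k'.1 (cmk S v)) hresp i, heq]
      exact k'.2.2 i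
    · apply Subtype.ext
      exact heq

open Finset in
lemma point_count {V : Type*} (E : Set (Sym2 V)) (S : Finset (Sym2 V))
    (hS : (S : Set (Sym2 V)) ⊆ E) (k : V → ℕ)
    [DecidablePred (fun I : Finset (Sym2 V) => ProperCol (E \ ↑I) k)]
    [Decidable (ProperCol (E \ ↑S) k ∧ ∀ u v : V, s(u, v) ∈ (S : Set (Sym2 V)) → k u = k v)] :
    ∑ I ∈ S.powerset, (-1 : ℤ) ^ I.card * (if ProperCol (E \ ↑I) k then 1 else 0)
      = (-1 : ℤ) ^ S.card *
        (if (ProperCol (E \ ↑S) k ∧ ∀ u v : V, s(u, v) ∈ (S : Set (Sym2 V)) → k u = k v)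
          then 1 else 0) := by
  classical
  set B : Finset (Sym2 V) := S.filter (fun e => ∃ u v : V, s(u, v) = e ∧ k u = k v) with hB
  have hBS : B ⊆ S := filter_subset _ _
  have hiff : ∀ I ∈ S.powerset,
      (ProperCol (E \ ↑I) k ↔ (ProperCol (E \ ↑S) k ∧ B ⊆ I)) := by
    intro I hI
    rw [mem_powerset] at hI
    constructor
    · intro hP
      constructor
      · intro u v huv
        exact hP u v ⟨huv.1, fun h => huv.2 (Finset.coe_subset.2 hI h)⟩
      · intro e heB
        rw [hB, mem_filter] at heB
        obtain ⟨heS, u, v, rfl, hkuv⟩ := heB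
        by_contra heI
        exact hP u v ⟨hS (Finset.mem_coe.2 heS), fun h => heI (Finset.mem_coe.1 h)⟩ hkuv
    · rintro ⟨hPS, hBI⟩ u v huv
      by_cases hSuv : s(u, v) ∈ S
      · intro hkuv
        have hmem : s(u, v) ∈ B := mem_filter.2 ⟨hSuv, u, v, rfl, hkuv⟩
        exact huv.2 (Finset.mem_coe.2 (hBI hmem))
      · exact hPS u v ⟨huv.1, fun h => hSuv (Finset.mem_coe.1 h)⟩
  have hmonoB : (∀ u v : V, s(u, v) ∈ (S : Set (Sym2 V)) → k u = k v) ↔ B = S := by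
    constructor
    · intro h
      refine subset_antisymm hBS fun e heS => ?_
      rw [hB, mem_filter]
      refine ⟨heS, ?_⟩
      induction e using Sym2.ind with
      | _ a b => exact ⟨a, b, rfl, h a b (Finset.mem_coe.2 heS)⟩
    · intro h u v huv
      have : s(u, v) ∈ B := h ▸ Finset.mem_coe.1 huv
      rw [hB, mem_filter] at this
      obtain ⟨-, a, b, hab, hk⟩ := this
      rw [Sym2.eq_iff] at hab
      rcases hab with ⟨h1, h2⟩ | ⟨h1, h2⟩
      · rw [← h1, ← h2]; exact hk
      · rw [← h2, ← h1]; exact hk.symm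
  rw [Finset.sum_congr rfl (fun I hI => by
    rw [if_congr (hiff I hI) rfl rfl])]
  by_cases hq : ProperCol (E \ ↑S) k
  · have : ∀ I ∈ S.powerset,
        (-1 : ℤ) ^ I.card * (if ProperCol (E \ ↑S) k ∧ B ⊆ I then 1 else 0)
          = if B ⊆ I then (-1 : ℤ) ^ I.card else 0 := by
      intro I _
      by_cases hBI : B ⊆ I
      · rw [if_pos ⟨hq, hBI⟩, if_pos hBI, mul_one]
      · rw [if_neg (fun h => hBI h.2), if_neg hBI, mul_zero]
    rw [Finset.sum_congr rfl this, ← Finset.sum_filter,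
      alt_sum_powerset_filter B S hBS]
    by_cases hbs : B = S
    · rw [if_pos hbs, if_pos ⟨hq, hmonoB.2 hbs⟩, mul_one]
    · rw [if_neg hbs, if_neg (fun h => hbs (hmonoB.1 h.2)), mul_zero]
  · rw [if_neg (fun h => hq h.1), mul_zero]
    refine Finset.sum_eq_zero fun I _ => ?_
    rw [if_neg (fun h => hq h.1), mul_zero]

open Finset in
lemma key_count {V : Type*} [Fintype V] (E : Set (Sym2 V)) (w : V → ℕ)
    (hw : ∀ v, 0 < w v) (S : Finset (Sym2 V)) (hS : (S : Set (Sym2 V)) ⊆ E) (d : ℕ →₀ ℕ) :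
    ∑ I ∈ S.powerset, (-1 : ℤ) ^ I.card *
        (Nat.card {k : V → ℕ | ProperCol (E \ ↑I) k
          ∧ ∀ i : ℕ, (∑ᶠ v ∈ {v : V | k v = i}, w v) = d i} : ℤ)
      = (-1 : ℤ) ^ S.card *
        (Nat.card {k' : CVert (S : Set (Sym2 V)) → ℕ | ProperCol (cEdges E (S : Set (Sym2 V))) k'
          ∧ ∀ i : ℕ, (∑ᶠ c ∈ {c : CVert (S : Set (Sym2 V)) | k' c = i},
              cWeight (S : Set (Sym2 V)) w c) = d i} : ℤ) := by
  classical
  have hW := wcond_finite w hw d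
  set A := hW.toFinset with hA
  have hcard : ∀ I : Finset (Sym2 V),
      (Nat.card {k : V → ℕ | ProperCol (E \ ↑I) k
        ∧ ∀ i : ℕ, (∑ᶠ v ∈ {v : V | k v = i}, w v) = d i} : ℤ)
      = ∑ k ∈ A, (if ProperCol (E \ ↑I) k then (1 : ℤ) else 0) := by
    intro I
    rw [natcard_setOf (ProperCol (E \ ↑I)) hW, Finset.sum_boole]
  have hcard2 : (Nat.card {k : V → ℕ | (ProperCol (E \ ↑S) k
        ∧ ∀ u v : V, s(u, v) ∈ (S : Set (Sym2 V)) → k u = k v)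
        ∧ ∀ i : ℕ, (∑ᶠ v ∈ {v : V | k v = i}, w v) = d i} : ℤ)
      = ∑ k ∈ A, (if (ProperCol (E \ ↑S) k
          ∧ ∀ u v : V, s(u, v) ∈ (S : Set (Sym2 V)) → k u = k v) then (1 : ℤ) else 0) := by
    rw [natcard_setOf _ hW, Finset.sum_boole]
  calc ∑ I ∈ S.powerset, (-1 : ℤ) ^ I.card *
        (Nat.card {k : V → ℕ | ProperCol (E \ ↑I) k
          ∧ ∀ i : ℕ, (∑ᶠ v ∈ {v : V | k v = i}, w v) = d i} : ℤ)
      = ∑ I ∈ S.powerset, ∑ k ∈ A,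
          (-1 : ℤ) ^ I.card * (if ProperCol (E \ ↑I) k then 1 else 0) := by
        refine Finset.sum_congr rfl fun I _ => ?_
        rw [hcard I, Finset.mul_sum]
    _ = ∑ k ∈ A, ∑ I ∈ S.powerset,
          (-1 : ℤ) ^ I.card * (if ProperCol (E \ ↑I) k then 1 else 0) := Finset.sum_comm
    _ = ∑ k ∈ A, (-1 : ℤ) ^ S.card *
          (if (ProperCol (E \ ↑S) k
            ∧ ∀ u v : V, s(u, v) ∈ (S : Set (Sym2 V)) → k u = k v) then 1 else 0) := by
        refine Finset.sum_congr rfl fun k _ => point_count E S hS k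
    _ = (-1 : ℤ) ^ S.card *
        (Nat.card {k' : CVert (S : Set (Sym2 V)) → ℕ | ProperCol (cEdges E (S : Set (Sym2 V))) k'
          ∧ ∀ i : ℕ, (∑ᶠ c ∈ {c : CVert (S : Set (Sym2 V)) | k' c = i},
              cWeight (S : Set (Sym2 V)) w c) = d i} : ℤ) := by
        rw [← Finset.mul_sum, ← hcard2, card_contract E (S : Set (Sym2 V)) w d]

open scoped Classical in
/-- for any nonempty `S ⊆ E(G)`,
`X_{(G,w)} = Σ_{∅ ≠ I ⊆ S} (-1)^(|I|-1) X_{(G-I,w)} + (-1)^(|S|) X_{(G/S, w_{G/S})}`. -/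
theorem stmt7 {V : Type*} [Finite V] (E : Set (Sym2 V)) (w : V → Nat)
    (hw : ∀ v, 0 < w v) (S : Finset (Sym2 V)) (hS : (S : Set (Sym2 V)) ⊆ E)
    (hSne : S.Nonempty) :
    csfW E w =
      (∑ I ∈ S.powerset.erase ∅,
        (-1 : MvPowerSeries Nat Int) ^ (I.card - 1) * csfW (E \ (I : Set (Sym2 V))) w)
      + (-1 : MvPowerSeries Nat Int) ^ S.card *
          csfW (cEdges E (S : Set (Sym2 V))) (cWeight (S : Set (Sym2 V)) w) := by
  cases nonempty_fintype V
  apply MvPowerSeries.ext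
  intro d
  rw [map_add, map_sum]
  have hC : ∀ (n : ℕ) (f : MvPowerSeries ℕ ℤ),
      MvPowerSeries.coeff d ((-1 : MvPowerSeries ℕ ℤ) ^ n * f)
        = (-1 : ℤ) ^ n * MvPowerSeries.coeff d f := by
    intro n f
    have h1 : ((-1 : MvPowerSeries ℕ ℤ)) ^ n = MvPowerSeries.C ((-1 : ℤ) ^ n) := by
      rw [map_pow, map_neg, map_one]
    rw [h1, MvPowerSeries.coeff_C_mul]
  simp_rw [hC]
  have hco : ∀ {W : Type _} (E' : Set (Sym2 W)) (w' : W → ℕ),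
      MvPowerSeries.coeff d (csfW E' w')
        = (Nat.card {k : W → ℕ | ProperCol E' k
            ∧ ∀ i : ℕ, (∑ᶠ v ∈ {v : W | k v = i}, w' v) = d i} : ℤ) := fun _ _ => rfl
  rw [hco, hco]
  simp_rw [hco]
  set N : Finset (Sym2 V) → ℤ := fun I =>
    (Nat.card {k : V → ℕ | ProperCol (E \ ↑I) k
      ∧ ∀ i : ℕ, (∑ᶠ v ∈ {v : V | k v = i}, w v) = d i} : ℤ) with hN
  have hkey := key_count E w hw S hS d
  have hsplit : ∑ I ∈ S.powerset, (-1 : ℤ) ^ I.card * N I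
      = N ∅ + ∑ I ∈ S.powerset.erase ∅, (-1 : ℤ) ^ I.card * N I := by
    rw [← Finset.add_sum_erase _ _ (Finset.mem_powerset.2 (Finset.empty_subset S))]
    norm_num
  have hterm : ∑ I ∈ S.powerset.erase ∅, (-1 : ℤ) ^ (I.card - 1) * N I
      = - ∑ I ∈ S.powerset.erase ∅, (-1 : ℤ) ^ I.card * N I := by
    rw [← Finset.sum_neg_distrib]
    refine Finset.sum_congr rfl fun I hI => ?_
    have hIne : I ≠ ∅ := Finset.ne_of_mem_erase hI
    have hc : I.card - 1 + 1 = I.card :=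
      Nat.succ_pred_eq_of_pos (Finset.card_pos.2 (Finset.nonempty_of_ne_empty hIne))
    have hpow : (-1 : ℤ) ^ (I.card - 1) = -(-1 : ℤ) ^ I.card := by
      have h2 : (-1 : ℤ) ^ I.card = (-1 : ℤ) ^ (I.card - 1) * (-1) := by
        rw [← pow_succ, hc]
      rw [h2]; ring
    rw [hpow]; ring
  have hN0 : N ∅ = (Nat.card {k : V → ℕ | ProperCol E k
      ∧ ∀ i : ℕ, (∑ᶠ v ∈ {v : V | k v = i}, w v) = d i} : ℤ) := by
    rw [hN]
    norm_num
  rw [← hN0]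
  linarith [hkey, hsplit, hterm]
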